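/- Let F : C → D be a multifunctor between closed multicategories. Then the object map X ↦ FX together with the closing transformations F̲_{X;Y} : FC̲(X;Y) → D̲(FX;FY) defines a D-functor F̲ : F_*C̲ → D̲; in particular F(1^{C̲}_X) · F̲_{X,X} = 1^{D̲}_{FX} and F(μ_{C̲}) · F̲_{X,Z} = (F̲_{X,Y}, F̲_{Y,Z}) · μ_{D̲}. -/

import Mathlib

universe u v

/-- A family of multimorphisms `f_i : Xss_i → Ys_i` (with matching lengths),
used to express simultaneous composition in a multicategory. -/
inductive HomFam (Obj : Type u) (Hom : List Obj → Obj → Type v) :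
    List (List Obj) → List Obj → Type (max u v)
  | nil : HomFam Obj Hom [] []
  | cons {Xs Y Xss Ys} : Hom Xs Y → HomFam Obj Hom Xss Ys →
      HomFam Obj Hom (Xs :: Xss) (Y :: Ys)

/-- A family of families of multimorphisms. -/
inductive FamFam (Obj : Type u) (Hom : List Obj → Obj → Type v) :
    List (List (List Obj)) → List (List Obj) → Type (max u v)
  | nil : FamFam Obj Hom [] []
  | cons {Xss Ys Xsss Yss} : HomFam Obj Hom Xss Ys → FamFam Obj Hom Xsss Yss →
      FamFam Obj Hom (Xss :: Xsss) (Ys :: Yss)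

variable {Obj : Type u} {Hom : List Obj → Obj → Type v}

/-- The family of identities on a list of objects. -/
def idFam (ident : ∀ X, Hom [X] X) : ∀ Ys : List Obj,
    HomFam Obj Hom (Ys.map fun y => [y]) Ys
  | [] => .nil
  | y :: ys => .cons (ident y) (idFam ident ys)

/-- Concatenation of families. -/
def appendFam : ∀ {A B C D}, HomFam Obj Hom A B → HomFam Obj Hom C D →
    HomFam Obj Hom (A ++ C) (B ++ D)
  | _, _, _, _, .nil, t => t
  | _, _, _, _, .cons f fs, t => .cons f (appendFam fs t)

/-- Flattening a family of families. -/
def flattenFam : ∀ {Xsss Yss}, FamFam Obj Hom Xsss Yss →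
    HomFam Obj Hom Xsss.flatten Yss.flatten
  | _, _, .nil => .nil
  | _, _, .cons fs fss => appendFam fs (flattenFam fss)

/-- Componentwise composition of a family of families with a family. -/
def zipComp
    (comp : ∀ {Xss Ys Z}, HomFam Obj Hom Xss Ys → Hom Ys Z → Hom Xss.flatten Z) :
    ∀ {Xsss Yss Zs}, FamFam Obj Hom Xsss Yss → HomFam Obj Hom Yss Zs →
      HomFam Obj Hom (Xsss.map List.flatten) Zs
  | _, _, _, .nil, .nil => .nil
  | _, _, _, .cons fs fss, .cons g gs => .cons (comp fs g) (zipComp comp fss gs)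

/-- A multicategory: objects, multimorphisms `X₁,…,Xₙ → Y`, identities and an
associative and unital simultaneous composition `(f₁,…,fₙ) · g`. -/
structure Multicategory : Type (max (u + 1) (v + 1)) where
  Obj : Type u
  Hom : List Obj → Obj → Type v
  ident : ∀ X : Obj, Hom [X] X
  comp : ∀ {Xss : List (List Obj)} {Ys : List Obj} {Z : Obj},
    HomFam Obj Hom Xss Ys → Hom Ys Z → Hom Xss.flatten Z
  id_comp : ∀ {Ys Z} (g : Hom Ys Z), HEq (comp (idFam ident Ys) g) g
  comp_id : ∀ {Xs Y} (f : Hom Xs Y), HEq (comp (.cons f .nil) (ident Y)) f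
  assoc : ∀ {Xsss Yss Zs Z} (fss : FamFam Obj Hom Xsss Yss)
    (gs : HomFam Obj Hom Yss Zs) (h : Hom Zs Z),
    HEq (comp (zipComp (fun fs g => comp fs g) fss gs) h)
        (comp (flattenFam fss) (comp gs h))

namespace Multicategory

variable (M : Multicategory.{u, v})

theorem map_singleton_flatten (l : List M.Obj) :
    (l.map fun x => [x]).flatten = l := by
  induction l <;> simp_all

theorem sflat (Xs Ys : List M.Obj) :
    ((Xs.map fun x => [x]) ++ [Ys]).flatten = Xs ++ Ys := by
  induction Xs <;> simp_all

theorem sflat2 (Xs Γ : List M.Obj) :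
    (Xs :: (Γ.map fun x => [x])).flatten = Xs ++ Γ := by
  simp [List.flatten_cons, map_singleton_flatten]

/-- `(1,…,1,f) · g` : plugging `f` into the last argument of `g`. -/
def plug {Xs Ys : List M.Obj} {H Z : M.Obj} (f : M.Hom Ys H)
    (g : M.Hom (Xs ++ [H]) Z) : M.Hom (Xs ++ Ys) Z :=
  cast (congrArg (M.Hom · Z) (M.sflat Xs Ys))
    (M.comp (appendFam (idFam M.ident Xs) (.cons f .nil)) g)

/-- `(f,1,…,1) · g` : plugging `f` into the first argument of `g`. -/
def plugFirst {Xs Γ : List M.Obj} {Y Z : M.Obj} (f : M.Hom Xs Y)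
    (g : M.Hom (Y :: Γ) Z) : M.Hom (Xs ++ Γ) Z :=
  cast (congrArg (M.Hom · Z) (M.sflat2 Xs Γ))
    (M.comp (.cons f (idFam M.ident Γ)) g)

/-- `(f) · h` : composing a multimorphism with a unary morphism. -/
def postcomp {Γ : List M.Obj} {Y Z : M.Obj} (f : M.Hom Γ Y) (h : M.Hom [Y] Z) :
    M.Hom Γ Z :=
  cast (congrArg (M.Hom · Z) (by simp : ([Γ].flatten : List M.Obj) = Γ))
    (M.comp (.cons f .nil) h)

/-- Composition in the underlying category. -/
def comp1 {X Y Z : M.Obj} (f : M.Hom [X] Y) (g : M.Hom [Y] Z) : M.Hom [X] Z :=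
  M.postcomp f g

/-- `(a, b) · g` : binary simultaneous composition. -/
def pair {As Bs : List M.Obj} {A' B' Cc : M.Obj} (a : M.Hom As A') (b : M.Hom Bs B')
    (g : M.Hom [A', B'] Cc) : M.Hom (As ++ Bs) Cc :=
  cast (congrArg (M.Hom · Cc) (by simp : ([As, Bs].flatten : List M.Obj) = As ++ Bs))
    (M.comp (.cons a (.cons b .nil)) g)

/-- `(f₁,…,fₘ,1) · g` for a family of unary morphisms `fᵢ`. -/
def sideComp {As Bs : List M.Obj} (fs : HomFam M.Obj M.Hom (As.map fun a => [a]) Bs)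
    {H Z : M.Obj} (g : M.Hom (Bs ++ [H]) Z) : M.Hom (As ++ [H]) Z :=
  cast (congrArg (M.Hom · Z) (M.sflat As [H]))
    (M.comp (appendFam fs (.cons (M.ident H) .nil)) g)

end Multicategory

/-- The image of a family of multimorphisms under a multifunctor. -/
def mapFam {M N : Multicategory.{u, v}} (obj : M.Obj → N.Obj)
    (map : ∀ {Xs Y}, M.Hom Xs Y → N.Hom (Xs.map obj) (obj Y)) :
    ∀ {Xss Ys}, HomFam M.Obj M.Hom Xss Ys →
      HomFam N.Obj N.Hom (Xss.map (List.map obj)) (Ys.map obj)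
  | _, _, .nil => .nil
  | _, _, .cons f fs => .cons (map f) (mapFam obj @map fs)

/-- A multifunctor between multicategories. -/
structure Multifunctor (M N : Multicategory.{u, v}) : Type (max u v) where
  obj : M.Obj → N.Obj
  map : ∀ {Xs Y}, M.Hom Xs Y → N.Hom (Xs.map obj) (obj Y)
  map_ident : ∀ X, map (M.ident X) = N.ident (obj X)
  map_comp : ∀ {Xss Ys Z} (fs : HomFam M.Obj M.Hom Xss Ys) (g : M.Hom Ys Z),
    HEq (map (M.comp fs g)) (N.comp (mapFam obj @map fs) (map g))

/-- A closed multicategory : a multicategory together with internal hom objects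
and evaluation morphisms such that `φ : f ↦ (1,…,1,f)·ev` is a bijection. -/
structure ClosedMulticategory extends Multicategory.{u, v} where
  ihom : List Obj → Obj → Obj
  ev : ∀ (Xs : List Obj) (Z : Obj), Hom (Xs ++ [ihom Xs Z]) Z
  closed : ∀ (Xs Ys : List Obj) (Z : Obj),
    Function.Bijective
      (fun f : Hom Ys (ihom Xs Z) => toMulticategory.plug f (ev Xs Z))

namespace ClosedMulticategory

variable (C : ClosedMulticategory.{u, v})

/-- The inverse of the bijection `φ` : currying. -/
noncomputable def curry {Xs Ys : List C.Obj} {Z : C.Obj}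
    (f : C.Hom (Xs ++ Ys) Z) : C.Hom Ys (C.ihom Xs Z) :=
  (Equiv.ofBijective _ (C.closed Xs Ys Z)).symm f

/-- The covariant action `C̲(W₁,…,Wₘ; h)` of a unary morphism `h` on internal
homs, defined by `(1,…,1,C̲(Ws;h)) · ev_{Ws;B} = ev_{Ws;A} · h`. -/
noncomputable def homCovM (Ws : List C.Obj) {A B : C.Obj} (h : C.Hom [A] B) :
    C.Hom [C.ihom Ws A] (C.ihom Ws B) :=
  C.curry (Xs := Ws) (C.toMulticategory.postcomp (C.ev Ws A) h)

/-- The contravariant action `C̲(h; Z)` of a unary morphism `h : A → B` on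
internal homs, defined by `(1,C̲(h;Z)) · ev_{A;Z} = (h,1) · ev_{B;Z}`. -/
noncomputable def homContra {A B : C.Obj} (h : C.Hom [A] B) (Z : C.Obj) :
    C.Hom [C.ihom [B] Z] (C.ihom [A] Z) :=
  C.curry (Xs := [A]) (C.toMulticategory.plugFirst h (C.ev [B] Z))

/-- The contravariant action `C̲(f₁,…,fₘ; Z)` of a family of unary morphisms on
internal homs. -/
noncomputable def homContraM {As Bs : List C.Obj}
    (fs : HomFam C.Obj C.Hom (As.map fun a => [a]) Bs) (Z : C.Obj) :
    C.Hom [C.ihom Bs Z] (C.ihom As Z) :=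
  C.curry (Xs := As) (C.toMulticategory.sideComp fs (C.ev Bs Z))

/-- Composition `μ` of the `C`-category `C̲`, determined by
`(1_X, μ)·ev_{X;Z} = (ev_{X;Y},1)·ev_{Y;Z}`. -/
noncomputable def mu (X Y Z : C.Obj) :
    C.Hom [C.ihom [X] Y, C.ihom [Y] Z] (C.ihom [X] Z) :=
  C.curry (Xs := [X])
    (C.toMulticategory.plugFirst (Xs := [X, C.ihom [X] Y]) (Γ := [C.ihom [Y] Z])
      (C.ev [X] Y) (C.ev [Y] Z))

/-- The identity `⟨1_X⟩ : () → C̲(X;X)` of the `C`-category `C̲`. -/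
noncomputable def oneHom (X : C.Obj) : C.Hom [] (C.ihom [X] X) :=
  C.curry (Xs := [X]) (Ys := []) (C.ident X)

/-- The morphism `L^X_{YZ} : C̲(Y;Z) → C̲(C̲(X;Y);C̲(X;Z))`, uniquely determined
by `(1, L^X_{YZ}) · ev = μ`. -/
noncomputable def Lhat (X Y Z : C.Obj) :
    C.Hom [C.ihom [Y] Z] (C.ihom [C.ihom [X] Y] (C.ihom [X] Z)) :=
  C.curry (Xs := [C.ihom [X] Y]) (C.mu X Y Z)

/-- The action `C̲(u;1) : C̲(1;X) → C̲(;X) = X` of a nullary morphism `u`. -/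
def uAct {one : C.Obj} (u : C.Hom [] one) (X : C.Obj) :
    C.Hom [C.ihom [one] X] X :=
  C.toMulticategory.plugFirst u (C.ev [one] X)

/-- `(one, u)` is a unit object of the closed multicategory `C` if all the
morphisms `C̲(u;1) : C̲(1;X) → X` are invertible. -/
def IsUnitObj (one : C.Obj) (u : C.Hom [] one) : Prop :=
  ∀ X : C.Obj, ∃ inv : C.Hom [X] (C.ihom [one] X),
    C.toMulticategory.comp1 (C.uAct u X) inv = C.ident (C.ihom [one] X) ∧
    C.toMulticategory.comp1 inv (C.uAct u X) = C.ident X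

end ClosedMulticategory

/-- The closing transformation `F̲_{Xs;Z} : F C̲(Xs;Z) → D̲(F Xs; FZ)` of a
multifunctor between closed multicategories, i.e. the unique morphism with
`(1,…,1,F̲) · ev^D = F(ev^C)`. -/
noncomputable def closingTrans {C D : ClosedMulticategory.{u, v}}
    (F : Multifunctor C.toMulticategory D.toMulticategory)
    (Xs : List C.Obj) (Z : C.Obj) :
    D.Hom [F.obj (C.ihom Xs Z)] (D.ihom (Xs.map F.obj) (F.obj Z)) :=
  D.curry (Xs := Xs.map F.obj)
    (cast (congrArg (D.Hom · (F.obj Z)) (List.map_append : List.map F.obj (Xs ++ [C.ihom Xs Z]) = List.map F.obj Xs ++ List.map F.obj [C.ihom Xs Z]))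
      (F.map (C.ev Xs Z)))

namespace ClosedMulticategory
variable (C : ClosedMulticategory.{u, v})

theorem plug_curry {Xs Ys : List C.Obj} {Z : C.Obj} (f : C.Hom (Xs ++ Ys) Z) :
    C.toMulticategory.plug (C.curry f) (C.ev Xs Z) = f :=
  (Equiv.ofBijective _ (C.closed Xs Ys Z)).apply_symm_apply f

theorem plug_inj {Xs Ys : List C.Obj} {Z : C.Obj}
    {f g : C.Hom Ys (C.ihom Xs Z)}
    (h : C.toMulticategory.plug f (C.ev Xs Z) = C.toMulticategory.plug g (C.ev Xs Z)) :
    f = g :=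
  (C.closed Xs Ys Z).injective h

end ClosedMulticategory

open ClosedMulticategory in
theorem part1 (C D : ClosedMulticategory.{u, v})
    (F : Multifunctor C.toMulticategory D.toMulticategory) (X : C.Obj) :
      D.toMulticategory.postcomp (F.map (C.oneHom X)) (closingTrans F [X] X)
        = D.oneHom (F.obj X) := by
  apply D.plug_inj (Xs := [(F.obj X)]) (Ys := [])
  have hrhs : D.toMulticategory.plug (D.oneHom (F.obj X)) (D.ev [(F.obj X)] (F.obj X)) = D.toMulticategory.ident (F.obj X) := by
    rw [show D.oneHom (F.obj X) = D.curry (Xs := [(F.obj X)]) (Ys := []) (D.toMulticategory.ident (F.obj X)) from rfl,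
      D.plug_curry]
  rw [hrhs]
  -- step 1: unfold plug/postcomp definitionally and rewrite ident as comp
  have h1 : D.toMulticategory.plug (D.toMulticategory.postcomp (F.map (C.oneHom X)) (closingTrans F [X] X)) (D.ev [(F.obj X)] (F.obj X))
      = D.toMulticategory.comp (.cons (D.toMulticategory.comp (.cons (D.toMulticategory.ident (F.obj X)) .nil) (D.toMulticategory.ident (F.obj X)))
          (.cons (D.toMulticategory.comp (.cons (F.map (C.oneHom X)) .nil) (closingTrans F [X] X)) .nil)) (D.ev [(F.obj X)] (F.obj X)) :=
    (congrArg (fun t => D.toMulticategory.comp (HomFam.cons t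
        (.cons (D.toMulticategory.comp (.cons (F.map (C.oneHom X)) .nil) (closingTrans F [X] X)) .nil)) (D.ev [(F.obj X)] (F.obj X)))
      (eq_of_heq (D.toMulticategory.comp_id (D.toMulticategory.ident (F.obj X))))).symm
  -- step 2: associativity
  have h2 := eq_of_heq (D.toMulticategory.assoc
    (FamFam.cons (HomFam.cons (D.toMulticategory.ident (F.obj X)) .nil)
      (.cons (HomFam.cons (F.map (C.oneHom X)) .nil) .nil))
    (HomFam.cons (D.toMulticategory.ident (F.obj X)) (.cons (closingTrans F [X] X) .nil)) (D.ev [(F.obj X)] (F.obj X)))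
  -- step 3: (1,(closingTrans F [X] X))·ev = F(ev)
  have h3 : D.toMulticategory.comp (HomFam.cons (D.toMulticategory.ident (F.obj X)) (.cons (closingTrans F [X] X) .nil)) (D.ev [(F.obj X)] (F.obj X))
      = F.map (C.ev [X] X) := by
    have := D.plug_curry (Xs := [(F.obj X)]) (Ys := [F.obj (C.ihom [X] X)])
      (cast (congrArg (D.Hom · (F.obj X)) (List.map_append : List.map F.obj ([X] ++ [C.ihom [X] X]) = List.map F.obj [X] ++ List.map F.obj [C.ihom [X] X]))
        (F.map (C.ev [X] X)))
    exact this.trans (eq_of_heq (cast_heq _ _))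
  -- step 4: naturality
  have h4 : D.toMulticategory.comp (HomFam.cons (D.toMulticategory.ident (F.obj X)) (.cons (F.map (C.oneHom X)) .nil)) (F.map (C.ev [X] X))
      = F.map (C.comp (HomFam.cons (C.ident X) (.cons (C.oneHom X) .nil)) (C.ev [X] X)) := by
    have hm := eq_of_heq (F.map_comp
      (HomFam.cons (C.ident X) (.cons (C.oneHom X) .nil)) (C.ev [X] X))
    have : mapFam F.obj F.map (HomFam.cons (C.ident X) (.cons (C.oneHom X) .nil))
        = HomFam.cons (D.toMulticategory.ident (F.obj X)) (.cons (F.map (C.oneHom X)) .nil) := by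
      show HomFam.cons (F.map (C.ident X)) (.cons (F.map (C.oneHom X)) .nil) = _
      rw [F.map_ident]
    rw [← this, ← hm]
  -- step 5: (1,oneHom)·ev = ident in C
  have h5 : C.comp (HomFam.cons (C.ident X) (.cons (C.oneHom X) .nil)) (C.ev [X] X)
      = C.ident X :=
    C.plug_curry (Xs := [X]) (Ys := []) (C.ident X)
  calc D.toMulticategory.plug (D.toMulticategory.postcomp (F.map (C.oneHom X)) (closingTrans F [X] X)) (D.ev [(F.obj X)] (F.obj X))
      = _ := h1
    _ = _ := h2
    _ = _ := congrArg (fun t => D.toMulticategory.comp (HomFam.cons (D.toMulticategory.ident (F.obj X))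
          (.cons (F.map (C.oneHom X)) .nil)) t) h3
    _ = _ := h4
    _ = F.map (C.ident X) := congrArg (fun t : C.Hom ([X] ++ []) X => F.map t) h5
    _ = D.toMulticategory.ident (F.obj X) := F.map_ident X

open ClosedMulticategory in
theorem plug_closingTrans {C D : ClosedMulticategory.{u, v}}
    (F : Multifunctor C.toMulticategory D.toMulticategory) (Xs : List C.Obj) (Z : C.Obj) :
    HEq (D.toMulticategory.plug (closingTrans F Xs Z) (D.ev (Xs.map F.obj) (F.obj Z)))
      (F.map (C.ev Xs Z)) :=
  (heq_of_eq (D.plug_curry _)).trans (cast_heq _ _)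

open ClosedMulticategory in
theorem part2 (C D : ClosedMulticategory.{u, v})
    (F : Multifunctor C.toMulticategory D.toMulticategory) (X Y Z : C.Obj) :
      D.toMulticategory.postcomp (F.map (C.mu X Y Z)) (closingTrans F [X] Z)
        = D.toMulticategory.pair (closingTrans F [X] Y) (closingTrans F [Y] Z)
            (D.mu (F.obj X) (F.obj Y) (F.obj Z)) := by
  apply D.plug_inj (Xs := [F.obj X]) (Ys := [F.obj (C.ihom [X] Y), F.obj (C.ihom [Y] Z)])
  have hEvXY : D.toMulticategory.comp
      (HomFam.cons (D.toMulticategory.ident (F.obj X))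
        (.cons (closingTrans F [X] Y) .nil)) (D.ev [F.obj X] (F.obj Y))
      = F.map (C.ev [X] Y) := eq_of_heq (plug_closingTrans F [X] Y)
  have hEvYZ : D.toMulticategory.comp
      (HomFam.cons (D.toMulticategory.ident (F.obj Y))
        (.cons (closingTrans F [Y] Z) .nil)) (D.ev [F.obj Y] (F.obj Z))
      = F.map (C.ev [Y] Z) := eq_of_heq (plug_closingTrans F [Y] Z)
  have hEvXZ : D.toMulticategory.comp
      (HomFam.cons (D.toMulticategory.ident (F.obj X))
        (.cons (closingTrans F [X] Z) .nil)) (D.ev [F.obj X] (F.obj Z))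
      = F.map (C.ev [X] Z) := eq_of_heq (plug_closingTrans F [X] Z)
  -- naturality of F with respect to (1_X, mu)·ev
  have hnat1 : D.toMulticategory.comp
      (HomFam.cons (D.toMulticategory.ident (F.obj X))
        (.cons (F.map (C.mu X Y Z)) .nil)) (F.map (C.ev [X] Z))
      = F.map (C.comp (HomFam.cons (C.ident X) (.cons (C.mu X Y Z) .nil)) (C.ev [X] Z)) := by
    have hm := eq_of_heq (F.map_comp
      (HomFam.cons (C.ident X) (.cons (C.mu X Y Z) .nil)) (C.ev [X] Z))
    have : mapFam F.obj F.map (HomFam.cons (C.ident X) (.cons (C.mu X Y Z) .nil))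
        = HomFam.cons (D.toMulticategory.ident (F.obj X)) (.cons (F.map (C.mu X Y Z)) .nil) := by
      show HomFam.cons (F.map (C.ident X)) (.cons (F.map (C.mu X Y Z)) .nil) = _
      rw [F.map_ident]
    rw [← this, ← hm]
  -- LHS chain
  have hL : D.toMulticategory.plug
      (D.toMulticategory.postcomp (F.map (C.mu X Y Z)) (closingTrans F [X] Z))
      (D.ev [F.obj X] (F.obj Z))
      = D.toMulticategory.comp (HomFam.cons (F.map (C.ev [X] Y))
          (.cons (closingTrans F [Y] Z) .nil)) (D.ev [F.obj Y] (F.obj Z)) := calc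
    D.toMulticategory.plug
      (D.toMulticategory.postcomp (F.map (C.mu X Y Z)) (closingTrans F [X] Z))
      (D.ev [F.obj X] (F.obj Z))
        = D.toMulticategory.comp (HomFam.cons
            (D.toMulticategory.comp (.cons (D.toMulticategory.ident (F.obj X)) .nil)
              (D.toMulticategory.ident (F.obj X)))
            (.cons (D.toMulticategory.comp (.cons (F.map (C.mu X Y Z)) .nil)
              (closingTrans F [X] Z)) .nil)) (D.ev [F.obj X] (F.obj Z)) :=
        (congrArg (fun t => D.toMulticategory.comp (HomFam.cons t
          (.cons (D.toMulticategory.comp (.cons (F.map (C.mu X Y Z)) .nil)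
            (closingTrans F [X] Z)) .nil)) (D.ev [F.obj X] (F.obj Z)))
          (eq_of_heq (D.toMulticategory.comp_id (D.toMulticategory.ident (F.obj X))))).symm
    _ = _ := eq_of_heq (D.toMulticategory.assoc
        (FamFam.cons (HomFam.cons (D.toMulticategory.ident (F.obj X)) .nil)
          (.cons (HomFam.cons (F.map (C.mu X Y Z)) .nil) .nil))
        (HomFam.cons (D.toMulticategory.ident (F.obj X))
          (.cons (closingTrans F [X] Z) .nil)) (D.ev [F.obj X] (F.obj Z)))
    _ = _ := congrArg (fun t => D.toMulticategory.comp
        (HomFam.cons (D.toMulticategory.ident (F.obj X))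
          (.cons (F.map (C.mu X Y Z)) .nil)) t) hEvXZ
    _ = _ := hnat1
    _ = F.map (C.toMulticategory.plugFirst
          (Xs := [X, C.ihom [X] Y]) (Γ := [C.ihom [Y] Z])
          (C.ev [X] Y) (C.ev [Y] Z)) :=
        congrArg (fun t : C.Hom ([X] ++ [C.ihom [X] Y, C.ihom [Y] Z]) Z => F.map t)
          (C.plug_curry (Xs := [X]) (Ys := [C.ihom [X] Y, C.ihom [Y] Z])
            (C.toMulticategory.plugFirst (Xs := [X, C.ihom [X] Y])
              (Γ := [C.ihom [Y] Z]) (C.ev [X] Y) (C.ev [Y] Z)))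
    _ = D.toMulticategory.comp
          (mapFam F.obj F.map (HomFam.cons (C.ev [X] Y)
            (.cons (C.ident (C.ihom [Y] Z)) .nil))) (F.map (C.ev [Y] Z)) :=
        eq_of_heq (F.map_comp
          (HomFam.cons (C.ev [X] Y) (.cons (C.ident (C.ihom [Y] Z)) .nil)) (C.ev [Y] Z))
    _ = D.toMulticategory.comp (HomFam.cons (F.map (C.ev [X] Y))
          (.cons (D.toMulticategory.ident (F.obj (C.ihom [Y] Z))) .nil))
          (F.map (C.ev [Y] Z)) := by
        show D.toMulticategory.comp (HomFam.cons (F.map (C.ev [X] Y))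
          (.cons (F.map (C.ident (C.ihom [Y] Z))) .nil)) (F.map (C.ev [Y] Z)) = _
        rw [F.map_ident]
    _ = D.toMulticategory.comp (HomFam.cons (F.map (C.ev [X] Y))
          (.cons (D.toMulticategory.ident (F.obj (C.ihom [Y] Z))) .nil))
          (D.toMulticategory.comp (HomFam.cons (D.toMulticategory.ident (F.obj Y))
            (.cons (closingTrans F [Y] Z) .nil)) (D.ev [F.obj Y] (F.obj Z))) :=
        congrArg (fun t : D.Hom [F.obj Y, F.obj (C.ihom [Y] Z)] (F.obj Z) =>
          D.toMulticategory.comp (HomFam.cons (F.map (C.ev [X] Y))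
            (.cons (D.toMulticategory.ident (F.obj (C.ihom [Y] Z))) .nil)) t) hEvYZ.symm
    _ = _ := (eq_of_heq (D.toMulticategory.assoc
        (FamFam.cons (HomFam.cons (F.map (C.ev [X] Y)) .nil)
          (.cons (HomFam.cons (D.toMulticategory.ident (F.obj (C.ihom [Y] Z))) .nil) .nil))
        (HomFam.cons (D.toMulticategory.ident (F.obj Y))
          (.cons (closingTrans F [Y] Z) .nil)) (D.ev [F.obj Y] (F.obj Z)))).symm
    _ = D.toMulticategory.comp (HomFam.cons (F.map (C.ev [X] Y))
          (.cons (D.toMulticategory.comp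
            (.cons (D.toMulticategory.ident (F.obj (C.ihom [Y] Z))) .nil)
            (closingTrans F [Y] Z)) .nil)) (D.ev [F.obj Y] (F.obj Z)) :=
        congrArg (fun t => D.toMulticategory.comp (HomFam.cons t
          (.cons (D.toMulticategory.comp
            (.cons (D.toMulticategory.ident (F.obj (C.ihom [Y] Z))) .nil)
            (closingTrans F [Y] Z)) .nil)) (D.ev [F.obj Y] (F.obj Z)))
          (eq_of_heq (D.toMulticategory.comp_id (F.map (C.ev [X] Y))))
    _ = _ := congrArg (fun t => D.toMulticategory.comp (HomFam.cons (F.map (C.ev [X] Y))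
          (.cons t .nil)) (D.ev [F.obj Y] (F.obj Z)))
          (eq_of_heq (D.toMulticategory.id_comp (closingTrans F [Y] Z)))
  -- RHS chain
  have hR : D.toMulticategory.plug
      (D.toMulticategory.pair (closingTrans F [X] Y) (closingTrans F [Y] Z)
        (D.mu (F.obj X) (F.obj Y) (F.obj Z)))
      (D.ev [F.obj X] (F.obj Z))
      = D.toMulticategory.comp (HomFam.cons (F.map (C.ev [X] Y))
          (.cons (closingTrans F [Y] Z) .nil)) (D.ev [F.obj Y] (F.obj Z)) := calc
    D.toMulticategory.plug
      (D.toMulticategory.pair (closingTrans F [X] Y) (closingTrans F [Y] Z)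
        (D.mu (F.obj X) (F.obj Y) (F.obj Z)))
      (D.ev [F.obj X] (F.obj Z))
        = D.toMulticategory.comp (HomFam.cons
            (D.toMulticategory.comp (.cons (D.toMulticategory.ident (F.obj X)) .nil)
              (D.toMulticategory.ident (F.obj X)))
            (.cons (D.toMulticategory.comp (.cons (closingTrans F [X] Y)
              (.cons (closingTrans F [Y] Z) .nil))
              (D.mu (F.obj X) (F.obj Y) (F.obj Z))) .nil)) (D.ev [F.obj X] (F.obj Z)) :=
        (congrArg (fun t => D.toMulticategory.comp (HomFam.cons t
          (.cons (D.toMulticategory.comp (.cons (closingTrans F [X] Y)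
            (.cons (closingTrans F [Y] Z) .nil))
            (D.mu (F.obj X) (F.obj Y) (F.obj Z))) .nil)) (D.ev [F.obj X] (F.obj Z)))
          (eq_of_heq (D.toMulticategory.comp_id (D.toMulticategory.ident (F.obj X))))).symm
    _ = _ := eq_of_heq (D.toMulticategory.assoc
        (FamFam.cons (HomFam.cons (D.toMulticategory.ident (F.obj X)) .nil)
          (.cons (HomFam.cons (closingTrans F [X] Y)
            (.cons (closingTrans F [Y] Z) .nil)) .nil))
        (HomFam.cons (D.toMulticategory.ident (F.obj X))
          (.cons (D.mu (F.obj X) (F.obj Y) (F.obj Z)) .nil)) (D.ev [F.obj X] (F.obj Z)))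
    _ = D.toMulticategory.comp (HomFam.cons (D.toMulticategory.ident (F.obj X))
          (.cons (closingTrans F [X] Y) (.cons (closingTrans F [Y] Z) .nil)))
          (D.toMulticategory.comp (HomFam.cons (D.ev [F.obj X] (F.obj Y))
            (.cons (D.toMulticategory.ident (D.ihom [F.obj Y] (F.obj Z))) .nil))
            (D.ev [F.obj Y] (F.obj Z))) :=
        congrArg (fun t : D.Hom ([F.obj X] ++
            [D.ihom [F.obj X] (F.obj Y), D.ihom [F.obj Y] (F.obj Z)]) (F.obj Z) =>
          D.toMulticategory.comp (HomFam.cons (D.toMulticategory.ident (F.obj X))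
            (.cons (closingTrans F [X] Y) (.cons (closingTrans F [Y] Z) .nil))) t)
          (D.plug_curry (Xs := [F.obj X])
            (Ys := [D.ihom [F.obj X] (F.obj Y), D.ihom [F.obj Y] (F.obj Z)])
            (D.toMulticategory.plugFirst
              (Xs := [F.obj X, D.ihom [F.obj X] (F.obj Y)])
              (Γ := [D.ihom [F.obj Y] (F.obj Z)])
              (D.ev [F.obj X] (F.obj Y)) (D.ev [F.obj Y] (F.obj Z))))
    _ = _ := (eq_of_heq (D.toMulticategory.assoc
        (FamFam.cons (HomFam.cons (D.toMulticategory.ident (F.obj X))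
          (.cons (closingTrans F [X] Y) .nil))
          (.cons (HomFam.cons (closingTrans F [Y] Z) .nil) .nil))
        (HomFam.cons (D.ev [F.obj X] (F.obj Y))
          (.cons (D.toMulticategory.ident (D.ihom [F.obj Y] (F.obj Z))) .nil))
        (D.ev [F.obj Y] (F.obj Z)))).symm
    _ = D.toMulticategory.comp (HomFam.cons (F.map (C.ev [X] Y))
          (.cons (D.toMulticategory.comp (.cons (closingTrans F [Y] Z) .nil)
            (D.toMulticategory.ident (D.ihom [F.obj Y] (F.obj Z)))) .nil))
          (D.ev [F.obj Y] (F.obj Z)) :=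
        congrArg (fun t => D.toMulticategory.comp (HomFam.cons t
          (.cons (D.toMulticategory.comp (.cons (closingTrans F [Y] Z) .nil)
            (D.toMulticategory.ident (D.ihom [F.obj Y] (F.obj Z)))) .nil))
          (D.ev [F.obj Y] (F.obj Z))) hEvXY
    _ = _ := congrArg (fun t => D.toMulticategory.comp (HomFam.cons (F.map (C.ev [X] Y))
          (.cons t .nil)) (D.ev [F.obj Y] (F.obj Z)))
          (eq_of_heq (D.toMulticategory.comp_id (closingTrans F [Y] Z)))
  exact hL.trans hR.symm

/-- Let `F : C → D` be a multifunctor between closed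
multicategories. Then `X ↦ FX` together with the closing transformations
`F̲_{X;Y} : F C̲(X;Y) → D̲(FX;FY)` defines a `D`-functor `F̲ : F_*C̲ → D̲`:
`F(1^{C̲}_X) · F̲_{X,X} = 1^{D̲}_{FX}` and
`F(μ_{C̲}) · F̲_{X,Z} = (F̲_{X,Y}, F̲_{Y,Z}) · μ_{D̲}`. -/
theorem closingTrans_DFunctor (C D : ClosedMulticategory.{u, v})
    (F : Multifunctor C.toMulticategory D.toMulticategory) :
    (∀ X : C.Obj,
      D.toMulticategory.postcomp (F.map (C.oneHom X)) (closingTrans F [X] X)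
        = D.oneHom (F.obj X)) ∧
    (∀ X Y Z : C.Obj,
      D.toMulticategory.postcomp (F.map (C.mu X Y Z)) (closingTrans F [X] Z)
        = D.toMulticategory.pair (closingTrans F [X] Y) (closingTrans F [Y] Z)
            (D.mu (F.obj X) (F.obj Y) (F.obj Z))) := by
  exact ⟨fun X => part1 C D F X, fun X Y Z => part2 C D F X Y Z⟩
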